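/- Let a, b, c, d be real numbers with b ≥ 0, d ≥ 0, a ≤ 0, c ≤ 0, and define the polynomial P(z) = 1 - 2(a+c)z + (3ac - bd - (a+c)(b+d))z² + 2ac(b+d)z³ + abcd z⁴. Then P, P', P'' have no common root in (0,∞). -/

import Mathlib

/-- The polynomial `P` arising from the abcd-Boussinesq phase has no common root
of `P`, `P'`, `P''` in `(0,∞)` when `b,d ≥ 0` and `a,c ≤ 0`. -/
theorem stmt13 (a b c d : ℝ) (hb : 0 ≤ b) (hd : 0 ≤ d) (ha : a ≤ 0) (hc : c ≤ 0)
    (P : ℝ → ℝ)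
    (hP : ∀ z : ℝ, P z = 1 - 2 * (a + c) * z
        + (3 * a * c - b * d - (a + c) * (b + d)) * z ^ 2
        + 2 * a * c * (b + d) * z ^ 3 + a * b * c * d * z ^ 4) :
    ¬ ∃ z : ℝ, 0 < z ∧ P z = 0 ∧ deriv P z = 0 ∧ deriv (deriv P) z = 0 := by
  set C2 := 3 * a * c - b * d - (a + c) * (b + d) with hC2
  set C3 := 2 * a * c * (b + d) with hC3
  set C4 := a * b * c * d with hC4
  have hPf : P = fun z : ℝ => 1 - 2 * (a + c) * z + C2 * z ^ 2 + C3 * z ^ 3 + C4 * z ^ 4 :=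
    funext hP
  have hD1 : ∀ z : ℝ, HasDerivAt P
      (-(2 * (a + c)) + C2 * (2 * z) + C3 * (3 * z ^ 2) + C4 * (4 * z ^ 3)) z := by
    intro z
    rw [hPf]
    have h := ((((hasDerivAt_const z (1:ℝ)).sub
        ((hasDerivAt_id z).const_mul (2 * (a + c)))).add
        ((hasDerivAt_pow 2 z).const_mul C2)).add
        ((hasDerivAt_pow 3 z).const_mul C3)).add
        ((hasDerivAt_pow 4 z).const_mul C4)
    convert h using 1
    case e'_4 => rfl
    case e'_5 => rfl
    case e'_8 => funext y; simp only [Pi.add_apply, Pi.sub_apply, id]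
    push_cast
    ring
  have hP' : deriv P = fun z : ℝ =>
      -(2 * (a + c)) + C2 * (2 * z) + C3 * (3 * z ^ 2) + C4 * (4 * z ^ 3) :=
    funext fun z => (hD1 z).deriv
  have hD2 : ∀ z : ℝ, HasDerivAt (deriv P)
      (C2 * 2 + C3 * (6 * z) + C4 * (12 * z ^ 2)) z := by
    intro z
    rw [hP']
    have h := ((((hasDerivAt_const z (-(2 * (a + c))))).add
        (((hasDerivAt_id z).const_mul 2).const_mul C2)).add
        (((hasDerivAt_pow 2 z).const_mul 3).const_mul C3)).add
        (((hasDerivAt_pow 3 z).const_mul 4).const_mul C4)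
    convert h using 1
    case e'_4 => rfl
    case e'_5 => rfl
    case e'_8 => funext y; simp only [Pi.add_apply, Pi.sub_apply, id]
    push_cast
    ring
  rintro ⟨z, hz, h0, h1, h2⟩
  rw [hP z] at h0
  rw [hP'] at h1
  have h2' : C2 * 2 + C3 * (6 * z) + C4 * (12 * z ^ 2) = 0 := by
    rw [← (hD2 z).deriv]; exact h2
  simp only at h1
  have hkey : 1 + C3 * z ^ 3 + 3 * C4 * z ^ 4 = 0 := by
    linear_combination h0 - z * h1 + (z ^ 2 / 2) * h2'
  have hac : 0 ≤ a * c := by nlinarith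
  have hbd2 : (0:ℝ) ≤ b + d := by linarith
  have habcd : 0 ≤ C4 := by
    have := mul_nonneg hac (mul_nonneg hb hd)
    rw [hC4]; nlinarith
  have hC3n : 0 ≤ C3 := by
    have := mul_nonneg hac hbd2
    rw [hC3]; nlinarith
  have hC3nn : 0 ≤ C3 * z ^ 3 := mul_nonneg hC3n (by positivity)
  have hC4nn : 0 ≤ C4 * z ^ 4 := mul_nonneg habcd (by positivity)
  linarith
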